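/- Let A and B be skew shapes. If the difference s_A − s_B of their skew Schur functions is Schur-positive, then rows(A) ⊴ rows(B) and cols(A) ⊴ cols(B) in the dominance order, where rows(·) and cols(·) denote the partitions of row lengths and column lengths respectively. -/

import Mathlib

open Finset

/-- The weakly decreasing rearrangement of a finite sequence (list) of natural numbers,
i.e. the partition obtained by sorting its parts into weakly decreasing order. -/
def sortDesc (l : List ℕ) : List ℕ := l.mergeSort (fun a b => b ≤ a)

/-- The (extended) dominance order on partitions, represented as weakly decreasing lists
of natural numbers (parts beyond the length of the list are taken to be `0`):
`Dom a b` means `a ⊴ b`, i.e. `a₁ + ⋯ + a_k ≤ b₁ + ⋯ + b_k` for all `k`. -/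
def Dom (a b : List ℕ) : Prop := ∀ k : ℕ, (a.take k).sum ≤ (b.take k).sum

/-- The conjugate (transpose) of a partition given as a list of natural numbers:
the `j`-th entry (0-indexed) is the number of parts that are `> j`. -/
def conj (l : List ℕ) : List ℕ :=
  (List.range (l.foldr max 0)).map (fun j => (l.filter (fun x => j < x)).length)

/-- A skew shape `λ/μ`: a pair of Young diagrams `μ ⊆ λ`. -/
structure SkewShape where
  outer : YoungDiagram
  inner : YoungDiagram
  le : inner ≤ outer

namespace SkewShape

/-- The cells (boxes) of a skew shape: boxes of the outer diagram not in the inner one. -/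
def cells (A : SkewShape) : Finset (ℕ × ℕ) := A.outer.cells \ A.inner.cells

/-- The number of rows of (the outer shape of) a skew shape. -/
def numRows (A : SkewShape) : ℕ := A.outer.colLen 0

/-- The number of columns of (the outer shape of) a skew shape. -/
def numCols (A : SkewShape) : ℕ := A.outer.rowLen 0

/-- `A.overlap k i` is the number of columns occupied in common by the `k` consecutive
rows `i, i+1, …, i+k-1` of the skew shape `A` (rows indexed from 0). -/
def overlap (A : SkewShape) (k i : ℕ) : ℕ :=
  ((Finset.range A.numCols).filter (fun j => ∀ t, t < k → (i + t, j) ∈ A.cells)).card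

/-- `rows_k(A)`: the weakly decreasing rearrangement of the row-overlap numbers
`(overlap k 0, overlap k 1, …)`; zero parts are discarded (a partition is identified
with its zero-padded versions).  `A.rowsK 1` is the partition of row lengths of `A`. -/
def rowsK (A : SkewShape) (k : ℕ) : List ℕ :=
  sortDesc (((List.range (A.numRows + 1 - k)).map (A.overlap k)).filter (fun x => 0 < x))

/-- The transpose (conjugate) of a skew shape. -/
def transpose (A : SkewShape) : SkewShape :=
  ⟨A.outer.transpose, A.inner.transpose, YoungDiagram.transpose_mono A.le⟩

/-- `cols_l(A)`: the weakly decreasing rearrangement of the column-overlap numbers of `A`;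
`A.colsK 1` is the partition of column lengths of `A`. -/
def colsK (A : SkewShape) (l : ℕ) : List ℕ := A.transpose.rowsK l

/-- `rects k l A` is the number of `k × l` rectangular subdiagrams (contiguous `k × l`
blocks of boxes) contained inside the skew shape `A`, recorded by the position of
their top-left corner. -/
def rects (A : SkewShape) (k l : ℕ) : ℕ :=
  (((Finset.range A.numRows) ×ˢ (Finset.range A.numCols)).filter
    (fun p => ∀ t, t < k → ∀ u, u < l → (p.1 + t, p.2 + u) ∈ A.cells)).card

end SkewShape

/-- A semistandard Young tableau of skew shape `A`: a filling of the boxes of `A`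
with positive integers, weakly increasing along rows and strictly increasing down
columns (entries outside `A` are recorded as `0`). -/
structure SkewSsyt (A : SkewShape) where
  entry : ℕ → ℕ → ℕ
  pos : ∀ i j, (i, j) ∈ A.cells → 1 ≤ entry i j
  zeros : ∀ i j, (i, j) ∉ A.cells → entry i j = 0
  row_weak : ∀ i j1 j2, j1 ≤ j2 → (i, j1) ∈ A.cells → (i, j2) ∈ A.cells →
      entry i j1 ≤ entry i j2
  col_strict : ∀ i1 i2 j, i1 < i2 → (i1, j) ∈ A.cells → (i2, j) ∈ A.cells →
      entry i1 j < entry i2 j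

/-- The number of boxes of `T` filled with the entry `v`. -/
def contentCount {A : SkewShape} (T : SkewSsyt A) (v : ℕ) : ℕ :=
  (A.cells.filter (fun c => T.entry c.1 c.2 = v)).card

/-- `T` has content `ν` (a partition written as a list, 0-indexed: `ν.getD v 0` is the
`(v+1)`-st part): the number of entries equal to `v + 1` is the `(v+1)`-st part of `ν`. -/
def HasContent {A : SkewShape} (T : SkewSsyt A) (ν : List ℕ) : Prop :=
  ∀ v : ℕ, contentCount T (v + 1) = ν.getD v 0

/-- `readBefore c c'` : the box `c` comes strictly before the box `c'` in the reverse
reading order (rows top to bottom, each row read right to left). -/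
def readBefore (c c' : ℕ × ℕ) : Prop := c.1 < c'.1 ∨ (c.1 = c'.1 ∧ c'.2 < c.2)

instance (c c' : ℕ × ℕ) : Decidable (readBefore c c') := by
  unfold readBefore; infer_instance

/-- `T` is a Littlewood–Richardson filling: its reverse reading word is a lattice word,
i.e. at every box `c` carrying an entry `v + 2`, the number of occurrences of `v + 2`
read so far (weakly up to `c`) is at most the number of occurrences of `v + 1` read
strictly before `c`. -/
def IsLR {A : SkewShape} (T : SkewSsyt A) : Prop :=
  ∀ c ∈ A.cells, ∀ v : ℕ, T.entry c.1 c.2 = v + 2 →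
    (A.cells.filter (fun c' => T.entry c'.1 c'.2 = v + 2 ∧ (readBefore c' c ∨ c' = c))).card ≤
    (A.cells.filter (fun c' => T.entry c'.1 c'.2 = v + 1 ∧ readBefore c' c)).card

/-- The support of the skew Schur function `s_A`: by the Littlewood–Richardson rule,
the set of partitions `ν` (weakly decreasing lists) admitting an LR filling of `A`
of content `ν`, i.e. those `ν` with `s_ν` appearing with nonzero coefficient in `s_A`. -/
def SkewShape.support (A : SkewShape) : Set (List ℕ) :=
  { ν | ν.Pairwise (· ≥ ·) ∧ ∃ T : SkewSsyt A, IsLR T ∧ HasContent T ν }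

/-- The coefficient of the Schur function `s_ν` in the Schur expansion of `s_A`:
by the Littlewood–Richardson rule, the number of LR fillings of `A` of content `ν`. -/
noncomputable def lrCoeff (A : SkewShape) (ν : List ℕ) : ℕ :=
  Nat.card { T : SkewSsyt A // IsLR T ∧ HasContent T ν }

/-- `s_A − s_B` is Schur-positive: every coefficient in the Schur expansion of the
difference is nonnegative, i.e. (by the LR rule) each LR coefficient of `B` is at most
the corresponding one of `A`. -/
def SchurPositiveDiff (A B : SkewShape) : Prop :=
  ∀ ν : List ℕ, ν.Pairwise (· ≥ ·) → lrCoeff B ν ≤ lrCoeff A ν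

/-- The skew Schur function `s_A = Σ_T x^T`, as a formal power series in the variables
`x_0, x_1, x_2, …` (variable `x_v` recording entries equal to `v + 1`): the coefficient
of the monomial with exponents `d` is the number of SSYT of shape `A` and content `d`. -/
noncomputable def skewSchur (A : SkewShape) : MvPowerSeries ℕ ℤ :=
  fun d => (Nat.card { T : SkewSsyt A // ∀ v : ℕ, contentCount T (v + 1) = d v } : ℤ)

/-- The boxes remaining after deleting the top box of every non-empty column of `A`:
a box survives iff there is a box of `A` directly above it. -/
def trimCells (A : SkewShape) : Finset (ℕ × ℕ) :=
  A.cells.filter (fun c => 1 ≤ c.1 ∧ (c.1 - 1, c.2) ∈ A.cells)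

/-- The set of boxes of the skew shape `A ∗ B`, obtained by positioning `B` immediately
below and to the left of `A` so that `A` and `B` share no common row or column. -/
def starCells (A B : SkewShape) : Finset (ℕ × ℕ) :=
  A.cells.image (fun c => (c.1, c.2 + B.numCols)) ∪
    B.cells.image (fun c => (c.1 + A.numRows, c.2))

/-- The straight shape (partition) `μ`, viewed as the skew shape `μ/(0)`. -/
def ofYD (μ : YoungDiagram) : SkewShape := ⟨μ, ⊥, bot_le⟩

/-- The list of parts `(μ_k, μ_{k+1}, …, μ_l)` (1-indexed) of a partition `μ` given as a
Young diagram, parts beyond the length of `μ` being `0`. -/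
def tailParts (μ : YoungDiagram) (k l : ℕ) : List ℕ :=
  (List.range (l + 1 - k)).map (fun t => μ.rowLen (k - 1 + t))


/-! ### Auxiliary list and finset lemmas -/

lemma sum_take_eq (l : List ℕ) (k : ℕ) :
    (l.take k).sum = ∑ v ∈ Finset.range k, l.getD v 0 := by
  induction l generalizing k with
  | nil => simp [List.getD]
  | cons a l ih =>
    cases k with
    | zero => simp
    | succ k =>
      rw [List.take_succ_cons, List.sum_cons, Finset.sum_range_succ', ih]
      simp [List.getD]
      ring

lemma sortDesc_sorted (l : List ℕ) : (sortDesc l).Pairwise (· ≥ ·) := by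
  have h := List.pairwise_mergeSort (le := fun a b : ℕ => decide (b ≤ a))
    (fun a b c hab hbc => by simp at *; omega)
    (fun a b => by simp; omega) l
  unfold sortDesc
  exact List.Pairwise.imp (fun {a b} hab => by simpa using of_decide_eq_true hab) h

lemma sortDesc_perm (l : List ℕ) : (sortDesc l).Perm l := List.mergeSort_perm l _

/-- threshold characterization of entries of a sorted list -/
lemma sorted_countP_iff {S : List ℕ} (h : S.Pairwise (· ≥ ·)) (j v : ℕ) :
    v < S.countP (fun x => decide (j < x)) ↔ j < S.getD v 0 := by
  induction S generalizing v with
  | nil => simp [List.getD]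
  | cons a S ih =>
    have ha : ∀ x ∈ S, x ≤ a := fun x hx => (List.pairwise_cons.mp h).1 x hx
    have hS : S.Pairwise (· ≥ ·) := (List.pairwise_cons.mp h).2
    rw [List.countP_cons]
    cases v with
    | zero =>
      simp only [List.getD_cons_zero]
      by_cases hja : j < a
      · simp [hja]
      · have h0 : S.countP (fun x => decide (j < x)) = 0 := by
          rw [List.countP_eq_zero]
          intro x hx
          have := ha x hx
          simp only [decide_eq_true_eq]
          omega
        rw [h0]
        simp [hja]
    | succ v =>
      simp only [List.getD_cons_succ]
      rw [← ih hS v]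
      by_cases hja : j < a
      · rw [decide_eq_true hja, if_pos rfl]
        omega
      · have h0 : S.countP (fun x => decide (j < x)) = 0 := by
          rw [List.countP_eq_zero]
          intro x hx
          have := ha x hx
          simp only [decide_eq_true_eq]
          omega
        have hd : decide (j < a) = false := by simp [hja]
        rw [h0, hd]
        simp
lemma getD_sortDesc_card (L : List ℕ) (v C : ℕ) (hC : ∀ x ∈ L, x ≤ C) :
    (sortDesc L).getD v 0 =
      ((Finset.range C).filter (fun j => v < L.countP (fun x => decide (j < x)))).card := by
  have hperm := sortDesc_perm L
  have hsort := sortDesc_sorted L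
  have hg : (sortDesc L).getD v 0 ≤ C := by
    rcases Nat.lt_or_ge v (sortDesc L).length with hv | hv
    · have hmem : (sortDesc L).getD v 0 ∈ sortDesc L := by
        rw [List.getD_eq_getElem _ _ hv]
        exact List.getElem_mem hv
      exact hC _ (hperm.mem_iff.mp hmem)
    · rw [List.getD_eq_default _ _ hv]; omega
  have : (Finset.range C).filter (fun j => v < L.countP (fun x => decide (j < x)))
      = Finset.range ((sortDesc L).getD v 0) := by
    ext j
    simp only [Finset.mem_filter, Finset.mem_range]
    rw [← hperm.countP_eq, sorted_countP_iff hsort]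
    constructor
    · exact fun h => h.2
    · exact fun h => ⟨lt_of_lt_of_le h hg, h⟩
  rw [this, Finset.card_range]

lemma countP_range (p : ℕ → Bool) (n : ℕ) :
    (List.range n).countP p = ((Finset.range n).filter (fun i => p i)).card := by
  induction n with
  | zero => simp
  | succ n ih =>
    rw [List.range_succ, List.countP_append, Finset.range_add_one, Finset.filter_insert]
    by_cases hp : p n = true
    · rw [if_pos hp, Finset.card_insert_of_notMem (by simp)]
      simp [hp, ih]
    · rw [if_neg hp]
      simp [hp, ih]

lemma rank_surj : ∀ (x : ℕ) (P : Finset ℕ), 0 < x → x ≤ P.card →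
    ∃ n ∈ P, (P.filter (· ≤ n)).card = x := by
  intro x
  induction x with
  | zero => omega
  | succ y ih =>
    intro P _ hcard
    have hne : P.Nonempty := Finset.card_pos.mp (by omega)
    set m := P.min' hne with hm
    rcases Nat.eq_zero_or_pos y with hy | hy
    · subst hy
      refine ⟨m, P.min'_mem hne, ?_⟩
      have : P.filter (· ≤ m) = {m} := by
        ext p
        simp only [Finset.mem_filter, Finset.mem_singleton]
        constructor
        · rintro ⟨hp, hpm⟩
          exact le_antisymm hpm (P.min'_le p hp)
        · rintro rfl; exact ⟨P.min'_mem hne, le_refl _⟩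
      rw [this]; simp
    · have hcard' : y ≤ (P.erase m).card := by
        rw [Finset.card_erase_of_mem (P.min'_mem hne)]
        omega
      obtain ⟨n, hn, hrank⟩ := ih (P.erase m) hy hcard'
      refine ⟨n, Finset.mem_of_mem_erase hn, ?_⟩
      have hmn : m ≤ n := P.min'_le n (Finset.mem_of_mem_erase hn)
      have : P.filter (· ≤ n) = insert m ((P.erase m).filter (· ≤ n)) := by
        ext p
        simp only [Finset.mem_filter, Finset.mem_insert, Finset.mem_erase]
        constructor
        · rintro ⟨hp, hpn⟩
          by_cases hpm : p = m
          · exact Or.inl hpm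
          · exact Or.inr ⟨⟨hpm, hp⟩, hpn⟩
        · rintro (rfl | ⟨⟨_, hp⟩, hpn⟩)
          · exact ⟨P.min'_mem hne, hmn⟩
          · exact ⟨hp, hpn⟩
      rw [this, Finset.card_insert_of_notMem (by simp), hrank]

noncomputable def pick (P : Finset ℕ) (x : ℕ) : ℕ :=
  if h : 0 < x ∧ x ≤ P.card then (rank_surj x P h.1 h.2).choose else 0

lemma pick_spec (P : Finset ℕ) (x : ℕ) (h1 : 0 < x) (h2 : x ≤ P.card) :
    pick P x ∈ P ∧ (P.filter (· ≤ pick P x)).card = x := by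
  rw [pick, dif_pos ⟨h1, h2⟩]
  obtain ⟨hm, hr⟩ := (rank_surj x P h1 h2).choose_spec
  exact ⟨hm, hr⟩

lemma take_sortDesc_select (f : ℕ → ℕ) (n k : ℕ) :
    ∃ s : Finset ℕ, s ⊆ Finset.range n ∧ s.card ≤ k ∧
      ((sortDesc (((List.range n).map f).filter (fun x => decide (0 < x)))).take k).sum
        ≤ ∑ i ∈ s, f i := by
  set L0 := (List.range n).map f with hL0
  set L := L0.filter (fun x => decide (0 < x)) with hL
  set t := (sortDesc L).take k with ht
  have hsub : t.Subperm L0 := by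
    have h1 : t.Sublist (sortDesc L) := List.take_sublist _ _
    have h2 : (sortDesc L).Perm L := sortDesc_perm L
    have h3 : L.Sublist L0 := List.filter_sublist
    exact (h1.subperm.trans h2.subperm).trans h3.subperm
  obtain ⟨u, hu, husub⟩ := hsub
  obtain ⟨r, hr, hur⟩ := List.sublist_map_iff.mp husub
  have hnodup : r.Nodup := (List.nodup_range).sublist hr
  refine ⟨r.toFinset, ?_, ?_, ?_⟩
  · intro i hi
    rw [List.mem_toFinset] at hi
    have := hr.subset hi
    simpa using this
  · rw [List.toFinset_card_of_nodup hnodup]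
    have : r.length = t.length := by
      rw [← hu.length_eq, hur, List.length_map]
    rw [this, ht]
    exact le_trans (List.length_take_le _ _) (le_refl _)
  · have hsum : t.sum = ∑ i ∈ r.toFinset, f i := by
      rw [← hu.sum_eq, hur]
      exact (List.sum_toFinset f hnodup).symm
    omega

lemma getD_map_range (f : ℕ → ℕ) (n v : ℕ) :
    ((List.range n).map f).getD v 0 = if v < n then f v else 0 := by
  split
  · rw [List.getD_eq_getElem _ _ (by simpa using ‹v < n›)]
    simp
  · rw [List.getD_eq_default _ _ (by simpa using ‹¬ v < n›)]

lemma card_range_filter_lt (a k : ℕ) :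
    ((Finset.range k).filter (fun i => i < a)).card = min a k := by
  have : (Finset.range k).filter (fun i => i < a) = Finset.range (min a k) := by
    ext i
    simp only [Finset.mem_filter, Finset.mem_range]
    omega
  rw [this, Finset.card_range]

lemma sorted_getD_anti {l : List ℕ} (h : l.Pairwise (· ≥ ·)) {i i' : ℕ} (hii : i ≤ i') :
    l.getD i' 0 ≤ l.getD i 0 := by
  rcases Nat.lt_or_ge i' l.length with hi' | hi'
  · have hi : i < l.length := by omega
    rw [List.getD_eq_getElem _ _ hi', List.getD_eq_getElem _ _ hi]
    rcases Nat.eq_or_lt_of_le hii with rfl | hlt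
    · exact le_refl _
    · exact (List.pairwise_iff_getElem.mp h) i i' hi hi' hlt
  · rw [List.getD_eq_default _ _ hi']
    omega

/-! ### Skew shape basics -/

namespace SkewShape

variable (X : SkewShape)

/-- row length of row `i` of the skew shape -/
def rl (i : ℕ) : ℕ := X.outer.rowLen i - X.inner.rowLen i

/-- column length of column `j` of the skew shape -/
def cl (j : ℕ) : ℕ := X.outer.colLen j - X.inner.colLen j

lemma mem_cells_iff {c : ℕ × ℕ} :
    c ∈ X.cells ↔ X.inner.rowLen c.1 ≤ c.2 ∧ c.2 < X.outer.rowLen c.1 := by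
  obtain ⟨i, j⟩ := c
  rw [cells, Finset.mem_sdiff, YoungDiagram.mem_cells, YoungDiagram.mem_cells]
  rw [YoungDiagram.mem_iff_lt_rowLen, YoungDiagram.mem_iff_lt_rowLen]
  dsimp only
  omega

lemma mem_cells_iff_col {c : ℕ × ℕ} :
    c ∈ X.cells ↔ X.inner.colLen c.2 ≤ c.1 ∧ c.1 < X.outer.colLen c.2 := by
  obtain ⟨i, j⟩ := c
  rw [cells, Finset.mem_sdiff, YoungDiagram.mem_cells, YoungDiagram.mem_cells]
  rw [YoungDiagram.mem_iff_lt_colLen, YoungDiagram.mem_iff_lt_colLen]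
  dsimp only
  omega

lemma inner_rowLen_le (i : ℕ) : X.inner.rowLen i ≤ X.outer.rowLen i := by
  rcases Nat.eq_zero_or_pos (X.inner.rowLen i) with h | h
  · omega
  · have : (i, X.inner.rowLen i - 1) ∈ X.inner := by
      rw [YoungDiagram.mem_iff_lt_rowLen]; omega
    have h2 := X.le this
    rw [YoungDiagram.mem_iff_lt_rowLen] at h2
    omega

lemma inner_colLen_le (j : ℕ) : X.inner.colLen j ≤ X.outer.colLen j := by
  rcases Nat.eq_zero_or_pos (X.inner.colLen j) with h | h
  · omega
  · have : (X.inner.colLen j - 1, j) ∈ X.inner := by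
      rw [YoungDiagram.mem_iff_lt_colLen]; omega
    have h2 := X.le this
    rw [YoungDiagram.mem_iff_lt_colLen] at h2
    omega

lemma row_bound {c : ℕ × ℕ} (hc : c ∈ X.cells) : c.1 < X.numRows := by
  rw [mem_cells_iff_col] at hc
  exact lt_of_lt_of_le hc.2 (X.outer.colLen_anti 0 c.2 (Nat.zero_le _))

lemma col_bound {c : ℕ × ℕ} (hc : c ∈ X.cells) : c.2 < X.numCols := by
  rw [mem_cells_iff] at hc
  exact lt_of_lt_of_le hc.2 (X.outer.rowLen_anti 0 c.1 (Nat.zero_le _))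

lemma rowLen_le_numCols (i : ℕ) : X.outer.rowLen i ≤ X.numCols :=
  X.outer.rowLen_anti 0 i (Nat.zero_le _)

lemma colLen_le_numRows (j : ℕ) : X.outer.colLen j ≤ X.numRows :=
  X.outer.colLen_anti 0 j (Nat.zero_le _)

lemma rl_le (i : ℕ) : X.rl i ≤ X.numCols := le_trans (Nat.sub_le _ _) (X.rowLen_le_numCols i)

lemma cl_le (j : ℕ) : X.cl j ≤ X.numRows := le_trans (Nat.sub_le _ _) (X.colLen_le_numRows j)

lemma overlap_one (i : ℕ) : X.overlap 1 i = X.rl i := by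
  rw [overlap]
  rw [Finset.filter_congr (q := fun j => (i, j) ∈ X.cells) (fun j _ => by
    constructor
    · intro h
      simpa using h 0 (by omega)
    · intro h t ht
      have : t = 0 := by omega
      subst this
      simpa using h)]
  have heq : (Finset.range X.numCols).filter (fun j => (i, j) ∈ X.cells)
      = Finset.Ico (X.inner.rowLen i) (X.outer.rowLen i) := by
    ext j
    simp only [Finset.mem_filter, Finset.mem_range, Finset.mem_Ico]
    constructor
    · rintro ⟨_, h⟩
      rw [mem_cells_iff] at h
      exact h
    · intro h
      have hm : (i, j) ∈ X.cells := by rw [mem_cells_iff]; exact h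
      exact ⟨X.col_bound hm, hm⟩
  rw [heq, Nat.card_Ico, rl]

lemma row_filter_card (i : ℕ) :
    (X.cells.filter (fun c => c.1 = i)).card = X.rl i := by
  have heq : X.cells.filter (fun c => c.1 = i)
      = (Finset.Ico (X.inner.rowLen i) (X.outer.rowLen i)).image (fun j => (i, j)) := by
    ext ⟨a, b⟩
    simp only [Finset.mem_filter, Finset.mem_image, Finset.mem_Ico, Prod.mk.injEq]
    constructor
    · rintro ⟨hc, rfl⟩
      rw [mem_cells_iff] at hc
      exact ⟨b, ⟨hc.1, hc.2⟩, rfl, rfl⟩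
    · rintro ⟨j, ⟨h1, h2⟩, rfl, rfl⟩
      exact ⟨by rw [mem_cells_iff]; exact ⟨h1, h2⟩, rfl⟩
  rw [heq, Finset.card_image_of_injective _ (fun a b hab => by simpa using hab), Nat.card_Ico]
  rfl

lemma col_filter_card (j : ℕ) :
    (X.cells.filter (fun c => c.2 = j)).card = X.cl j := by
  have heq : X.cells.filter (fun c => c.2 = j)
      = (Finset.Ico (X.inner.colLen j) (X.outer.colLen j)).image (fun i => (i, j)) := by
    ext ⟨a, b⟩
    simp only [Finset.mem_filter, Finset.mem_image, Finset.mem_Ico, Prod.mk.injEq]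
    constructor
    · rintro ⟨hc, rfl⟩
      rw [mem_cells_iff_col] at hc
      exact ⟨a, ⟨hc.1, hc.2⟩, rfl, rfl⟩
    · rintro ⟨i, ⟨h1, h2⟩, rfl, rfl⟩
      exact ⟨by rw [mem_cells_iff_col]; exact ⟨h1, h2⟩, rfl⟩
  rw [heq, Finset.card_image_of_injective _ (fun a b hab => by simpa using hab), Nat.card_Ico]
  rfl

lemma sum_rl (s : Finset ℕ) :
    ∑ i ∈ s, X.rl i = (X.cells.filter (fun c => c.1 ∈ s)).card := by
  have : X.cells.filter (fun c => c.1 ∈ s) = s.biUnion (fun i => X.cells.filter (fun c => c.1 = i)) := by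
    ext c
    simp only [Finset.mem_filter, Finset.mem_biUnion]
    constructor
    · rintro ⟨hc, hs⟩; exact ⟨c.1, hs, hc, rfl⟩
    · rintro ⟨i, hi, hc, rfl⟩; exact ⟨hc, hi⟩
  rw [this, Finset.card_biUnion]
  · exact Finset.sum_congr rfl (fun i _ => (X.row_filter_card i).symm)
  · intro a _ b _ hab
    simp only [Finset.disjoint_left, Finset.mem_filter]
    rintro c ⟨_, h1⟩ ⟨_, h2⟩
    exact hab (h1 ▸ h2 ▸ rfl)

lemma sum_cl (s : Finset ℕ) :
    ∑ j ∈ s, X.cl j = (X.cells.filter (fun c => c.2 ∈ s)).card := by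
  have : X.cells.filter (fun c => c.2 ∈ s) = s.biUnion (fun j => X.cells.filter (fun c => c.2 = j)) := by
    ext c
    simp only [Finset.mem_filter, Finset.mem_biUnion]
    constructor
    · rintro ⟨hc, hs⟩; exact ⟨c.2, hs, hc, rfl⟩
    · rintro ⟨j, hj, hc, rfl⟩; exact ⟨hc, hj⟩
  rw [this, Finset.card_biUnion]
  · exact Finset.sum_congr rfl (fun j _ => (X.col_filter_card j).symm)
  · intro a _ b _ hab
    simp only [Finset.disjoint_left, Finset.mem_filter]
    rintro c ⟨_, h1⟩ ⟨_, h2⟩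
    exact hab (h1 ▸ h2 ▸ rfl)

lemma transpose_numRows : X.transpose.numRows = X.numCols := by
  rw [transpose, numRows, numCols]
  exact X.outer.colLen_transpose 0

lemma transpose_numCols : X.transpose.numCols = X.numRows := by
  rw [transpose, numCols, numRows]
  exact X.outer.rowLen_transpose 0

lemma transpose_rl (i : ℕ) : X.transpose.rl i = X.cl i := by
  rw [transpose, rl, cl, YoungDiagram.rowLen_transpose, YoungDiagram.rowLen_transpose]

lemma rowsK_one_eq : X.rowsK 1 =
    sortDesc (((List.range X.numRows).map X.rl).filter (fun x => decide (0 < x))) := by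
  rw [rowsK]
  have h1 : X.numRows + 1 - 1 = X.numRows := by omega
  rw [h1, show List.map (X.overlap 1) (List.range X.numRows)
      = List.map X.rl (List.range X.numRows) from List.map_congr_left (fun i _ => X.overlap_one i)]

lemma colsK_one_eq : X.colsK 1 =
    sortDesc (((List.range X.numCols).map X.cl).filter (fun x => decide (0 < x))) := by
  rw [colsK, X.transpose.rowsK_one_eq, X.transpose_numRows,
    show List.map X.transpose.rl (List.range X.numCols)
      = List.map X.cl (List.range X.numCols) from List.map_congr_left (fun i _ => X.transpose_rl i)]

end SkewShape

/-! ### Contents, finiteness and support transfer -/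

section Content

variable {A : SkewShape} (T : SkewSsyt A) {ν : List ℕ}

lemma entry_sub_lt_of_mem (hν : HasContent T ν) {c : ℕ × ℕ} (hc : c ∈ A.cells) :
    T.entry c.1 c.2 - 1 < ν.length := by
  have h1 : 1 ≤ T.entry c.1 c.2 := T.pos c.1 c.2 hc
  have h2 : 1 ≤ contentCount T (T.entry c.1 c.2) := by
    rw [contentCount]
    have : c ∈ A.cells.filter (fun c' => T.entry c'.1 c'.2 = T.entry c.1 c.2) := by
      simp [hc]
    have := Finset.card_pos.mpr ⟨c, this⟩
    omega
  have h3 := hν (T.entry c.1 c.2 - 1)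
  rw [Nat.sub_add_cancel h1] at h3
  by_contra hcon
  rw [List.getD_eq_default _ _ (by omega)] at h3
  omega

lemma ssyt_ext {T1 T2 : SkewSsyt A} (h : ∀ c ∈ A.cells, T1.entry c.1 c.2 = T2.entry c.1 c.2) :
    T1 = T2 := by
  cases T1 with
  | mk e1 p1 z1 r1 c1 =>
    cases T2 with
    | mk e2 p2 z2 r2 c2 =>
      simp only [SkewSsyt.mk.injEq]
      funext i j
      by_cases hc : (i, j) ∈ A.cells
      · exact h (i, j) hc
      · rw [z1 i j hc, z2 i j hc]

lemma finite_lr (A : SkewShape) (ν : List ℕ) :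
    Finite { T : SkewSsyt A // IsLR T ∧ HasContent T ν } := by
  have : Finite ({ c // c ∈ A.cells } → Fin (ν.length + 1)) := by infer_instance
  apply Finite.of_injective (β := { c // c ∈ A.cells } → Fin (ν.length + 1))
    (f := fun T c => ⟨T.1.entry c.1.1 c.1.2, by
      have := entry_sub_lt_of_mem T.1 T.2.2 c.2
      have := T.1.pos c.1.1 c.1.2 c.2
      omega⟩)
  intro T1 T2 h
  apply Subtype.ext
  apply ssyt_ext
  intro c hc
  have := congrFun h ⟨c, hc⟩
  simpa using this

lemma support_transfer {A B : SkewShape} (h : SchurPositiveDiff A B) {ν : List ℕ}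
    (hs : ν.Pairwise (· ≥ ·)) (hB : ∃ T : SkewSsyt B, IsLR T ∧ HasContent T ν) :
    ∃ T : SkewSsyt A, IsLR T ∧ HasContent T ν := by
  obtain ⟨T, hT⟩ := hB
  have hfin := finite_lr B ν
  have hpos : 0 < lrCoeff B ν := by
    rw [lrCoeff]
    rw [Nat.card_pos_iff]
    exact ⟨⟨⟨T, hT⟩⟩, hfin⟩
  have hposA : 0 < lrCoeff A ν := lt_of_lt_of_le hpos (h ν hs)
  rw [lrCoeff, Nat.card_pos_iff] at hposA
  obtain ⟨⟨T', hT'⟩⟩ := hposA.1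
  exact ⟨T', hT'⟩

end Content

/-! ### Reading order and occurrence numbers -/

lemma readBefore_trans {a b c : ℕ × ℕ} (h1 : readBefore a b) (h2 : readBefore b c) :
    readBefore a c := by
  rw [readBefore] at *
  omega

lemma readBefore_asymm {a b : ℕ × ℕ} (h1 : readBefore a b) (h2 : readBefore b a) : False := by
  rw [readBefore] at *
  omega

lemma readBefore_irrefl (a : ℕ × ℕ) : ¬ readBefore a a := by
  rw [readBefore]
  omega

lemma readBefore_trichotomy {c c' : ℕ × ℕ} (h : c ≠ c') : readBefore c c' ∨ readBefore c' c := by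
  obtain ⟨a, b⟩ := c
  obtain ⟨a', b'⟩ := c'
  rw [Ne, Prod.mk.injEq] at h
  rw [readBefore, readBefore]
  dsimp only at *
  omega

/-- linearization of the reading order -/
def rpos (W : ℕ) (c : ℕ × ℕ) : ℕ := c.1 * W + (W - 1 - c.2)

lemma rpos_lt_iff {W : ℕ} {c c' : ℕ × ℕ} (hc : c.2 < W) (hc' : c'.2 < W) :
    rpos W c < rpos W c' ↔ readBefore c c' := by
  obtain ⟨a, b⟩ := c
  obtain ⟨a', b'⟩ := c'
  rw [rpos, rpos, readBefore]
  dsimp only at *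
  rcases Nat.lt_trichotomy a a' with h | h | h
  · have h1 : (a + 1) * W ≤ a' * W := Nat.mul_le_mul_right W h
    have h2 : (a + 1) * W = a * W + W := by ring
    constructor
    · intro _; left; exact h
    · intro _; omega
  · subst h
    constructor <;> (intro hh; omega)
  · have h1 : (a' + 1) * W ≤ a * W := Nat.mul_le_mul_right W h
    have h2 : (a' + 1) * W = a' * W + W := by ring
    constructor <;> (intro hh; omega)

section Occ

variable {A : SkewShape} (T : SkewSsyt A)

/-- the occurrence number of a box among boxes of the same entry, in reading order -/
noncomputable def occ (b : ℕ × ℕ) : ℕ :=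
  (A.cells.filter (fun b' => T.entry b'.1 b'.2 = T.entry b.1 b.2 ∧
    (readBefore b' b ∨ b' = b))).card

lemma occ_pos {b : ℕ × ℕ} (hb : b ∈ A.cells) : 1 ≤ occ T b := by
  rw [occ]
  have : b ∈ A.cells.filter (fun b' => T.entry b'.1 b'.2 = T.entry b.1 b.2 ∧
      (readBefore b' b ∨ b' = b)) := by
    simp [hb]
  have := Finset.card_pos.mpr ⟨b, this⟩
  omega

lemma occ_le_content {b : ℕ × ℕ} :
    occ T b ≤ contentCount T (T.entry b.1 b.2) := by
  rw [occ, contentCount]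
  apply Finset.card_le_card
  intro c hc
  rw [Finset.mem_filter] at *
  exact ⟨hc.1, hc.2.1⟩

lemma occ_lt_of_readBefore {b1 b2 : ℕ × ℕ} (h1 : b1 ∈ A.cells) (h2 : b2 ∈ A.cells)
    (hent : T.entry b1.1 b1.2 = T.entry b2.1 b2.2) (hrb : readBefore b1 b2) :
    occ T b1 < occ T b2 := by
  rw [occ, occ, hent]
  apply Finset.card_lt_card
  rw [Finset.ssubset_iff_of_subset]
  · refine ⟨b2, by simp [h2], ?_⟩
    simp only [Finset.mem_filter]
    rintro ⟨_, _, hb | hb⟩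
    · exact readBefore_asymm hrb hb
    · rw [hb] at hrb
      exact readBefore_irrefl _ hrb
  · intro c hc
    rw [Finset.mem_filter] at *
    refine ⟨hc.1, hc.2.1, Or.inl ?_⟩
    rcases hc.2.2 with h | h
    · exact readBefore_trans h hrb
    · rw [h]; exact hrb

lemma occ_inj {b1 b2 : ℕ × ℕ} (h1 : b1 ∈ A.cells) (h2 : b2 ∈ A.cells)
    (hent : T.entry b1.1 b1.2 = T.entry b2.1 b2.2) (hocc : occ T b1 = occ T b2) :
    b1 = b2 := by
  by_contra hne
  rcases readBefore_trichotomy hne with h | h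
  · have := occ_lt_of_readBefore T h1 h2 hent h
    omega
  · have := occ_lt_of_readBefore T h2 h1 hent.symm h
    omega

lemma exists_pred_occ (hLR : IsLR T) {b : ℕ × ℕ} (hb : b ∈ A.cells) {v : ℕ}
    (he : T.entry b.1 b.2 = v + 2) :
    ∃ b' ∈ A.cells, T.entry b'.1 b'.2 = v + 1 ∧ occ T b' = occ T b ∧ b'.1 < b.1 := by
  classical
  set x := occ T b with hx
  set P := A.cells.filter (fun c' => T.entry c'.1 c'.2 = v + 1 ∧ readBefore c' b) with hP
  have hxP : x ≤ P.card := by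
    have hlr := hLR b hb v he
    rw [hx, occ, he]
    exact hlr
  have hx1 : 1 ≤ x := occ_pos T hb
  have hinj : Set.InjOn (rpos A.numCols) P := by
    intro c hc c' hc' heq
    have hc1 := (Finset.mem_filter.mp (Finset.mem_coe.mp hc)).1
    have hc'1 := (Finset.mem_filter.mp (Finset.mem_coe.mp hc')).1
    by_contra hne
    rcases readBefore_trichotomy hne with h | h
    · have := (rpos_lt_iff (A.col_bound hc1) (A.col_bound hc'1)).mpr h
      omega
    · have := (rpos_lt_iff (A.col_bound hc'1) (A.col_bound hc1)).mpr h
      omega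
  set Q := P.image (rpos A.numCols) with hQ
  have hcardQ : Q.card = P.card := Finset.card_image_of_injOn hinj
  obtain ⟨n, hnQ, hrank⟩ := rank_surj x Q hx1 (by omega)
  obtain ⟨b', hb'P, hb'n⟩ := Finset.mem_image.mp hnQ
  have hb'facts := Finset.mem_filter.mp hb'P
  have hb'c : b' ∈ A.cells := hb'facts.1
  have hb'e : T.entry b'.1 b'.2 = v + 1 := hb'facts.2.1
  have hb'rb : readBefore b' b := hb'facts.2.2
  have hrow : b'.1 < b.1 := by
    rcases hb'rb with h | h
    · exact h
    · exfalso
      obtain ⟨hrow, hcol⟩ := h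
      have hbb' : (b.1, b'.2) ∈ A.cells := by
        have h2 : (b'.1, b'.2) ∈ A.cells := hb'c
        rw [hrow] at h2
        exact h2
      have hbb : (b.1, b.2) ∈ A.cells := hb
      have hw := T.row_weak b.1 b.2 b'.2 (le_of_lt hcol) hbb hbb'
      have he' : T.entry b.1 b'.2 = v + 1 := by
        rw [← hb'e, hrow]
      omega
  refine ⟨b', hb'c, hb'e, ?_, hrow⟩
  have hseteq : A.cells.filter (fun c' => T.entry c'.1 c'.2 = T.entry b'.1 b'.2 ∧
      (readBefore c' b' ∨ c' = b')) = P.filter (fun p => rpos A.numCols p ≤ n) := by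
    ext q
    simp only [Finset.mem_filter, hP, hb'e]
    constructor
    · rintro ⟨hq, hqe, hqr⟩
      have hqb : readBefore q b := by
        rcases hqr with h | h
        · exact readBefore_trans h hb'rb
        · rw [h]; exact hb'rb
      refine ⟨⟨hq, hqe, hqb⟩, ?_⟩
      rw [← hb'n]
      rcases hqr with h | h
      · exact le_of_lt ((rpos_lt_iff (A.col_bound hq) (A.col_bound hb'c)).mpr h)
      · rw [h]
    · rintro ⟨⟨hq, hqe, hqb⟩, hqn⟩
      refine ⟨hq, hqe, ?_⟩
      by_cases hqb' : q = b'
      · exact Or.inr hqb'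
      · left
        rcases readBefore_trichotomy hqb' with h | h
        · exact h
        · exfalso
          have := (rpos_lt_iff (A.col_bound hb'c) (A.col_bound hq)).mpr h
          omega
  have himg : (P.filter (fun p => rpos A.numCols p ≤ n)).image (rpos A.numCols)
      = Q.filter (· ≤ n) := by
    ext m
    simp only [Finset.mem_image, Finset.mem_filter, hQ]
    constructor
    · rintro ⟨p, ⟨hp, hpn⟩, rfl⟩
      exact ⟨⟨p, hp, rfl⟩, hpn⟩
    · rintro ⟨⟨p, hp, rfl⟩, hpn⟩
      exact ⟨p, ⟨hp, hpn⟩, rfl⟩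
  have hcard2 : (P.filter (fun p => rpos A.numCols p ≤ n)).card = (Q.filter (· ≤ n)).card := by
    rw [← himg]
    exact (Finset.card_image_of_injOn (hinj.mono (by
      intro p hp
      have := Finset.mem_coe.mp hp
      exact Finset.mem_coe.mpr (Finset.mem_of_mem_filter _ this)))).symm
  rw [occ, hseteq, hcard2, hrank]

lemma row_lt_of_val_lt (hLR : IsLR T) : ∀ e2 : ℕ, ∀ b1 b2 : ℕ × ℕ, b1 ∈ A.cells → b2 ∈ A.cells →
    T.entry b2.1 b2.2 = e2 → occ T b1 = occ T b2 → T.entry b1.1 b1.2 < e2 → b1.1 < b2.1 := by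
  intro e2
  induction e2 using Nat.strong_induction_on with
  | _ e2 ih =>
    intro b1 b2 hb1 hb2 he2 hocc hlt
    have h1 : 1 ≤ T.entry b1.1 b1.2 := T.pos _ _ hb1
    have he2' : ∃ v, e2 = v + 2 := ⟨e2 - 2, by omega⟩
    obtain ⟨v, rfl⟩ := he2'
    obtain ⟨b', hb'c, hb'e, hb'occ, hb'row⟩ := exists_pred_occ T hLR hb2 he2
    rcases Nat.lt_or_ge (T.entry b1.1 b1.2) (v + 1) with hcase | hcase
    · have := ih (v + 1) (by omega) b1 b' hb1 hb'c hb'e (by omega) hcase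
      omega
    · have hent : T.entry b1.1 b1.2 = v + 1 := by omega
      have : b1 = b' := occ_inj T hb1 hb'c (by omega) (by omega)
      rw [this]
      exact hb'row

end Occ

/-! ### The key counting bounds -/

/-- the distinct-rows index of a box among boxes of its occurrence class -/
noncomputable def jrow {A : SkewShape} (T : SkewSsyt A) (SEL : Finset (ℕ × ℕ)) (b : ℕ × ℕ) : ℕ :=
  ((SEL.filter (fun b' => occ T b' = occ T b ∧ T.entry b'.1 b'.2 ≤ T.entry b.1 b.2)).image
    (fun b' => b'.1)).card

lemma main_rows {A : SkewShape} (T : SkewSsyt A) (hLR : IsLR T) {ν : List ℕ}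
    (hcont : HasContent T ν) (hs : ν.Pairwise (· ≥ ·)) (s : Finset ℕ) {k : ℕ}
    (hcard : s.card ≤ k) :
    (A.cells.filter (fun c => c.1 ∈ s)).card ≤ ∑ v ∈ Finset.range k, ν.getD v 0 := by
  classical
  set SEL := A.cells.filter (fun c => c.1 ∈ s) with hSEL
  have hSELmem : ∀ b ∈ SEL, b ∈ A.cells ∧ b.1 ∈ s := by
    intro b hb
    rw [hSEL, Finset.mem_filter] at hb
    exact hb
  have hmemF : ∀ b ∈ SEL,
      b ∈ SEL.filter (fun b' => occ T b' = occ T b ∧ T.entry b'.1 b'.2 ≤ T.entry b.1 b.2) := by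
    intro b hb
    rw [Finset.mem_filter]
    exact ⟨hb, rfl, le_refl _⟩
  have hjr1 : ∀ b ∈ SEL, 1 ≤ jrow T SEL b := by
    intro b hb
    rw [jrow]
    have hmem : b.1 ∈ (SEL.filter (fun b' => occ T b' = occ T b ∧
        T.entry b'.1 b'.2 ≤ T.entry b.1 b.2)).image (fun b' => b'.1) :=
      Finset.mem_image.mpr ⟨b, hmemF b hb, rfl⟩
    exact Finset.card_pos.mpr ⟨b.1, hmem⟩
  have hjrk : ∀ b ∈ SEL, jrow T SEL b ≤ k := by
    intro b hb
    rw [jrow]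
    refine le_trans (Finset.card_le_card (t := s) ?_) hcard
    intro ρ hρ
    obtain ⟨b', hb', rfl⟩ := Finset.mem_image.mp hρ
    exact (hSELmem b' (Finset.mem_of_mem_filter _ hb')).2
  have hjval : ∀ b ∈ SEL, jrow T SEL b ≤ T.entry b.1 b.2 := by
    intro b hb
    rw [jrow]
    have hle : (((SEL.filter (fun b' => occ T b' = occ T b ∧
        T.entry b'.1 b'.2 ≤ T.entry b.1 b.2)).image (fun b' => b'.1)).card : ℕ)
        ≤ (Finset.Icc 1 (T.entry b.1 b.2)).card := by
      set Fb := SEL.filter (fun b' => occ T b' = occ T b ∧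
        T.entry b'.1 b'.2 ≤ T.entry b.1 b.2) with hFb
      have hFbmem : ∀ b' ∈ Fb, b' ∈ SEL ∧ occ T b' = occ T b ∧
          T.entry b'.1 b'.2 ≤ T.entry b.1 b.2 := by
        intro b' hb'
        rw [hFb, Finset.mem_filter] at hb'
        exact hb'
      apply Finset.card_le_card_of_injOn
        (fun ρ => (Fb.filter (fun b' => b'.1 = ρ)).sup (fun b' => T.entry b'.1 b'.2))
      · intro ρ hρ
        obtain ⟨b0, hb0, rfl⟩ := Finset.mem_image.mp hρ
        have hb0' : b0 ∈ Fb.filter (fun b' => b'.1 = b0.1) := by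
          rw [Finset.mem_filter]
          exact ⟨hb0, rfl⟩
        rw [Finset.mem_coe, Finset.mem_Icc]
        constructor
        · refine le_trans ?_ (Finset.le_sup (f := fun b' => T.entry b'.1 b'.2) hb0')
          exact T.pos _ _ (hSELmem b0 (hFbmem b0 hb0).1).1
        · apply Finset.sup_le
          intro b1 hb1
          exact (hFbmem b1 (Finset.mem_of_mem_filter _ hb1)).2.2
      · intro ρ1 hρ1 ρ2 hρ2 heq
        obtain ⟨b1, hb1m, rfl⟩ := Finset.mem_image.mp (Finset.mem_coe.mp hρ1)
        obtain ⟨b2, hb2m, rfl⟩ := Finset.mem_image.mp (Finset.mem_coe.mp hρ2)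
        dsimp only at heq
        have hne1 : (Fb.filter (fun b' => b'.1 = b1.1)).Nonempty :=
          ⟨b1, by rw [Finset.mem_filter]; exact ⟨hb1m, rfl⟩⟩
        have hne2 : (Fb.filter (fun b' => b'.1 = b2.1)).Nonempty :=
          ⟨b2, by rw [Finset.mem_filter]; exact ⟨hb2m, rfl⟩⟩
        obtain ⟨c1, hc1, hc1v⟩ := Finset.exists_mem_eq_sup _ hne1 (fun b' => T.entry b'.1 b'.2)
        obtain ⟨c2, hc2, hc2v⟩ := Finset.exists_mem_eq_sup _ hne2 (fun b' => T.entry b'.1 b'.2)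
        have hc1F := Finset.mem_filter.mp hc1
        have hc2F := Finset.mem_filter.mp hc2
        have hc1Fm := hFbmem c1 hc1F.1
        have hc2Fm := hFbmem c2 hc2F.1
        have hc1c : c1 ∈ A.cells := (hSELmem c1 hc1Fm.1).1
        have hc2c : c2 ∈ A.cells := (hSELmem c2 hc2Fm.1).1
        have hvv : T.entry c1.1 c1.2 = T.entry c2.1 c2.2 := by
          rw [← hc1v, ← hc2v, heq]
        have hoo : occ T c1 = occ T c2 := by
          rw [hc1Fm.2.1, hc2Fm.2.1]
        have hcc : c1 = c2 := occ_inj T hc1c hc2c hvv hoo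
        rw [← hc1F.2, ← hc2F.2, hcc]
    rw [Nat.card_Icc] at hle
    omega
  have hoccb : ∀ b ∈ SEL, occ T b ≤ ν.getD (T.entry b.1 b.2 - 1) 0 := by
    intro b hb
    have h1 := occ_le_content T (b := b)
    have h2 := hcont (T.entry b.1 b.2 - 1)
    have hpos := T.pos b.1 b.2 (hSELmem b hb).1
    rw [Nat.sub_add_cancel hpos] at h2
    rw [← h2]
    exact h1
  set Tgt := (Finset.range k).biUnion
    (fun v => (Finset.range (ν.getD v 0)).image (fun x => (x, v))) with hTgt
  have hcardTgt : Tgt.card = ∑ v ∈ Finset.range k, ν.getD v 0 := by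
    rw [hTgt, Finset.card_biUnion]
    · refine Finset.sum_congr rfl (fun v _ => ?_)
      rw [Finset.card_image_of_injective _ (fun a b hab => by simpa using hab),
        Finset.card_range]
    · intro a _ b _ hab
      simp only [Finset.disjoint_left, Finset.mem_image, Finset.mem_range]
      rintro ⟨x, v⟩ ⟨x1, hx1, he1⟩ ⟨x2, hx2, he2⟩
      apply hab
      have h1 := (Prod.mk.injEq _ _ _ _).mp he1
      have h2 := (Prod.mk.injEq _ _ _ _).mp he2
      omega
  rw [← hcardTgt]
  apply Finset.card_le_card_of_injOn (fun b => (occ T b - 1, jrow T SEL b - 1))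
  · intro b hb
    rw [hTgt, Finset.mem_coe, Finset.mem_biUnion]
    refine ⟨jrow T SEL b - 1, ?_, ?_⟩
    · rw [Finset.mem_range]
      have h1 := hjr1 b hb
      have h2 := hjrk b hb
      omega
    · rw [Finset.mem_image]
      refine ⟨occ T b - 1, ?_, rfl⟩
      rw [Finset.mem_range]
      have h1 := hoccb b hb
      have h2 : ν.getD (T.entry b.1 b.2 - 1) 0 ≤ ν.getD (jrow T SEL b - 1) 0 := by
        apply sorted_getD_anti hs
        have := hjval b hb
        omega
      have h3 := occ_pos T (hSELmem b hb).1
      omega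
  · intro b1 hb1' b2 hb2' heq
    have hb1 := Finset.mem_coe.mp hb1'
    have hb2 := Finset.mem_coe.mp hb2'
    have hocc1 := occ_pos T (hSELmem b1 hb1).1
    have hocc2 := occ_pos T (hSELmem b2 hb2).1
    have hjr1' := hjr1 b1 hb1
    have hjr2' := hjr1 b2 hb2
    have hpinj := (Prod.mk.injEq _ _ _ _).mp heq
    have heq1 : occ T b1 = occ T b2 := by omega
    have heq2 : jrow T SEL b1 = jrow T SEL b2 := by omega
    have key : ∀ c1 c2 : ℕ × ℕ, c1 ∈ SEL → c2 ∈ SEL → occ T c1 = occ T c2 →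
        T.entry c1.1 c1.2 < T.entry c2.1 c2.2 → jrow T SEL c1 < jrow T SEL c2 := by
      intro c1 c2 hc1 hc2 ho hv
      rw [jrow, jrow]
      apply Finset.card_lt_card
      rw [Finset.ssubset_iff_of_subset]
      · refine ⟨c2.1, Finset.mem_image.mpr ⟨c2, hmemF c2 hc2, rfl⟩, ?_⟩
        intro hcon
        obtain ⟨b', hb'F, hb'eq⟩ := Finset.mem_image.mp hcon
        rw [Finset.mem_filter] at hb'F
        have hb'c : b' ∈ A.cells := (hSELmem b' hb'F.1).1
        have hc2c : c2 ∈ A.cells := (hSELmem c2 hc2).1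
        have hlt : b'.1 < c2.1 := by
          apply row_lt_of_val_lt T hLR (T.entry c2.1 c2.2) b' c2 hb'c hc2c rfl
          · rw [hb'F.2.1, ho]
          · have := hb'F.2.2
            omega
        omega
      · intro ρ hρ
        obtain ⟨b', hb'F, rfl⟩ := Finset.mem_image.mp hρ
        refine Finset.mem_image.mpr ⟨b', ?_, rfl⟩
        rw [Finset.mem_filter] at hb'F ⊢
        refine ⟨hb'F.1, ?_, ?_⟩
        · rw [hb'F.2.1, ho]
        · have := hb'F.2.2
          omega
    rcases Nat.lt_trichotomy (T.entry b1.1 b1.2) (T.entry b2.1 b2.2) with hv | hv | hv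
    · have := key b1 b2 hb1 hb2 heq1 hv
      omega
    · exact occ_inj T (hSELmem b1 hb1).1 (hSELmem b2 hb2).1 hv heq1
    · have := key b2 b1 hb2 hb1 heq1.symm hv
      omega

lemma main_cols {A : SkewShape} (T : SkewSsyt A) {ν : List ℕ}
    (hcont : HasContent T ν) (s : Finset ℕ) {k : ℕ} (hcard : s.card ≤ k) :
    (A.cells.filter (fun c => c.2 ∈ s)).card
      ≤ ∑ v ∈ Finset.range ν.length, min (ν.getD v 0) k := by
  classical
  set SEL := A.cells.filter (fun c => c.2 ∈ s) with hSEL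
  have hSELmem : ∀ b ∈ SEL, b ∈ A.cells ∧ b.2 ∈ s := by
    intro b hb
    rw [hSEL, Finset.mem_filter] at hb
    exact hb
  have hpart : SEL = (Finset.range ν.length).biUnion
      (fun v => SEL.filter (fun c => T.entry c.1 c.2 = v + 1)) := by
    ext b
    simp only [Finset.mem_biUnion, Finset.mem_range]
    constructor
    · intro hb
      have hc := (hSELmem b hb).1
      have h1 := T.pos b.1 b.2 hc
      have h2 := entry_sub_lt_of_mem T hcont hc
      exact ⟨T.entry b.1 b.2 - 1, by omega, by rw [Finset.mem_filter]; exact ⟨hb, by omega⟩⟩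
    · rintro ⟨v, _, hb⟩
      exact Finset.mem_of_mem_filter _ hb
  rw [hpart, Finset.card_biUnion]
  · apply Finset.sum_le_sum
    intro v _
    apply le_min
    · rw [← hcont v]
      apply Finset.card_le_card
      intro b hb
      rw [Finset.mem_filter] at hb ⊢
      exact ⟨(hSELmem b hb.1).1, hb.2⟩
    · refine le_trans (Finset.card_le_card_of_injOn (fun b => b.2) ?_ ?_) hcard
      · intro b hb
        rw [Finset.mem_coe, Finset.mem_filter] at hb
        exact (hSELmem b hb.1).2
      · intro b1 hb1 b2 hb2 heq
        have h1 := Finset.mem_filter.mp (Finset.mem_coe.mp hb1)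
        have h2 := Finset.mem_filter.mp (Finset.mem_coe.mp hb2)
        have hc1 := (hSELmem b1 h1.1).1
        have hc2 := (hSELmem b2 h2.1).1
        dsimp only at heq
        by_contra hne
        have hne1 : b1.1 ≠ b2.1 := by
          intro hr
          apply hne
          exact Prod.ext hr heq
        rcases Nat.lt_or_ge b1.1 b2.1 with h | h
        · have hcc2 : (b2.1, b1.2) ∈ A.cells := by rw [heq]; exact hc2
          have := T.col_strict b1.1 b2.1 b1.2 h hc1 hcc2
          have he2 : T.entry b2.1 b1.2 = v + 1 := by rw [heq]; exact h2.2
          omega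
        · have hlt : b2.1 < b1.1 := by omega
          have hcc1 : (b1.1, b2.2) ∈ A.cells := by rw [← heq]; exact hc1
          have := T.col_strict b2.1 b1.1 b2.2 hlt hc2 hcc1
          have he1 : T.entry b1.1 b2.2 = v + 1 := by rw [← heq]; exact h1.2
          omega
  · intro a _ b _ hab
    simp only [Finset.disjoint_left, Finset.mem_filter]
    rintro c ⟨_, h1⟩ ⟨_, h2⟩
    omega

/-! ### The superstandard column filling -/

/-- fill each column of `X` with `1, 2, 3, …` from the top -/
def colFill (X : SkewShape) : SkewSsyt X where
  entry i j := if (i, j) ∈ X.cells then i + 1 - X.inner.colLen j else 0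
  pos := by
    intro i j hc
    rw [if_pos hc]
    have := (X.mem_cells_iff_col).mp hc
    dsimp only at this
    omega
  zeros := by
    intro i j hc
    rw [if_neg hc]
  row_weak := by
    intro i j1 j2 hj hc1 hc2
    rw [if_pos hc1, if_pos hc2]
    have h1 := (X.mem_cells_iff_col).mp hc1
    have h2 := (X.mem_cells_iff_col).mp hc2
    dsimp only at h1 h2
    have := X.inner.colLen_anti j1 j2 hj
    omega
  col_strict := by
    intro i1 i2 j hi hc1 hc2
    rw [if_pos hc1, if_pos hc2]
    have h1 := (X.mem_cells_iff_col).mp hc1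
    have h2 := (X.mem_cells_iff_col).mp hc2
    dsimp only at h1 h2
    omega

lemma colFill_entry (X : SkewShape) {i j : ℕ} (hc : (i, j) ∈ X.cells) :
    (colFill X).entry i j = i + 1 - X.inner.colLen j := by
  show (if (i, j) ∈ X.cells then i + 1 - X.inner.colLen j else 0) = _
  rw [if_pos hc]

lemma colFill_isLR (X : SkewShape) : IsLR (colFill X) := by
  intro c hc v he
  apply Finset.card_le_card_of_injOn (fun b => (b.1 - 1, b.2))
  · intro b hb
    rw [Finset.mem_coe, Finset.mem_filter] at hb ⊢
    obtain ⟨hbc, hbe, hbr⟩ := hb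
    obtain ⟨i', j'⟩ := b
    dsimp only at hbe hbr ⊢
    rw [colFill_entry X hbc] at hbe
    have hmem := (X.mem_cells_iff_col).mp hbc
    dsimp only at hmem
    have hi' : i' = X.inner.colLen j' + v + 1 := by omega
    have hup : (i' - 1, j') ∈ X.cells := by
      rw [X.mem_cells_iff_col]
      dsimp only
      constructor
      · omega
      · omega
    refine ⟨hup, ?_, ?_⟩
    · rw [colFill_entry X hup]
      omega
    · -- readBefore (i'-1, j') c
      have hbc1 : i' ≤ c.1 := by
        rcases hbr with h | h
        · rw [readBefore] at h
          dsimp only at h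
          omega
        · rw [← h]
      rw [readBefore]
      left
      dsimp only
      rw [colFill_entry X (show (c.1, c.2) ∈ X.cells from hc)] at he
      have hcm := (X.mem_cells_iff_col).mp (show (c.1, c.2) ∈ X.cells from hc)
      dsimp only at hcm
      omega
  · intro b1 hb1 b2 hb2 heq
    have h1 := Finset.mem_filter.mp (Finset.mem_coe.mp hb1)
    have h2 := Finset.mem_filter.mp (Finset.mem_coe.mp hb2)
    obtain ⟨i1, j1⟩ := b1
    obtain ⟨i2, j2⟩ := b2
    rw [colFill_entry X h1.1] at h1
    rw [colFill_entry X h2.1] at h2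
    have hm1 := (X.mem_cells_iff_col).mp h1.1
    have hm2 := (X.mem_cells_iff_col).mp h2.1
    dsimp only at *
    have hp := (Prod.mk.injEq _ _ _ _).mp heq
    have he1 := h1.2.1
    have he2 := h2.2.1
    rw [Prod.mk.injEq]
    omega

/-- the list of column multiplicities: `νcol X` is the conjugate of the partition of
column lengths -/
def nuCol (X : SkewShape) : List ℕ :=
  (List.range X.numRows).map
    (fun v => ((Finset.range X.numCols).filter (fun j => v < X.cl j)).card)

lemma nuCol_sorted (X : SkewShape) : (nuCol X).Pairwise (· ≥ ·) := by
  rw [nuCol, List.pairwise_map]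
  have h := List.pairwise_lt_range (n := X.numRows)
  apply h.imp
  intro a b hab
  apply Finset.card_le_card
  intro j hj
  rw [Finset.mem_filter] at hj ⊢
  exact ⟨hj.1, by omega⟩

lemma nuCol_hasContent (X : SkewShape) : HasContent (colFill X) (nuCol X) := by
  intro v
  rw [contentCount, nuCol, getD_map_range]
  by_cases hv : v < X.numRows
  · rw [if_pos hv]
    apply Finset.card_bij (fun b _ => b.2)
    · intro b hb
      rw [Finset.mem_filter] at hb ⊢
      refine ⟨Finset.mem_range.mpr (X.col_bound hb.1), ?_⟩
      obtain ⟨i, j⟩ := b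
      have hbe := hb.2
      rw [colFill_entry X hb.1] at hbe
      have hm := (X.mem_cells_iff_col).mp hb.1
      dsimp only at *
      rw [SkewShape.cl]
      omega
    · intro b1 hb1 b2 hb2 heq
      rw [Finset.mem_filter] at hb1 hb2
      obtain ⟨i1, j1⟩ := b1
      obtain ⟨i2, j2⟩ := b2
      have he1 := hb1.2
      have he2 := hb2.2
      rw [colFill_entry X hb1.1] at he1
      rw [colFill_entry X hb2.1] at he2
      have hm1 := (X.mem_cells_iff_col).mp hb1.1
      have hm2 := (X.mem_cells_iff_col).mp hb2.1
      dsimp only at *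
      subst heq
      rw [Prod.mk.injEq]
      omega
    · intro j hj
      rw [Finset.mem_filter, Finset.mem_range] at hj
      have hcl := hj.2
      rw [SkewShape.cl] at hcl
      refine ⟨(X.inner.colLen j + v, j), ?_, rfl⟩
      rw [Finset.mem_filter]
      have hmem : (X.inner.colLen j + v, j) ∈ X.cells := by
        rw [X.mem_cells_iff_col]
        dsimp only
        omega
      refine ⟨hmem, ?_⟩
      rw [colFill_entry X hmem]
      omega
  · rw [if_neg hv]
    rw [Finset.card_eq_zero, Finset.filter_eq_empty_iff]
    intro b hb
    obtain ⟨i, j⟩ := b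
    intro hbe
    rw [colFill_entry X hb] at hbe
    have hm := (X.mem_cells_iff_col).mp hb
    have hrow := X.row_bound hb
    dsimp only at *
    have := X.colLen_le_numRows j
    omega

/-! ### The extreme row filling -/

/-- number of rows among `0,…,i` of `X` whose length is at least `u` -/
def Nro (X : SkewShape) (u i : ℕ) : ℕ :=
  ((Finset.range (i + 1)).filter (fun i' => u ≤ X.rl i')).card

/-- set of all rows of length at least `u` -/
def Pset (X : SkewShape) (u : ℕ) : Finset ℕ :=
  (Finset.range X.numRows).filter (fun i' => u ≤ X.rl i')

lemma Nro_anti_u (X : SkewShape) {u1 u2 : ℕ} (i : ℕ) (h : u1 ≤ u2) :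
    Nro X u2 i ≤ Nro X u1 i := by
  apply Finset.card_le_card
  intro i' hi'
  rw [Finset.mem_filter] at hi' ⊢
  exact ⟨hi'.1, by omega⟩

lemma Nro_mono_i (X : SkewShape) (u : ℕ) {i1 i2 : ℕ} (h : i1 ≤ i2) :
    Nro X u i1 ≤ Nro X u i2 := by
  apply Finset.card_le_card
  intro i' hi'
  rw [Finset.mem_filter, Finset.mem_range] at hi' ⊢
  exact ⟨by omega, hi'.2⟩

lemma Nro_strict (X : SkewShape) {u i1 i2 : ℕ} (h1 : i1 < i2) (h2 : u ≤ X.rl i2) :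
    Nro X u i1 < Nro X u i2 := by
  apply Finset.card_lt_card
  rw [Finset.ssubset_iff_of_subset]
  · refine ⟨i2, ?_, ?_⟩
    · rw [Finset.mem_filter, Finset.mem_range]
      exact ⟨by omega, h2⟩
    · rw [Finset.mem_filter, Finset.mem_range]
      intro hcon
      omega
  · intro i' hi'
    rw [Finset.mem_filter, Finset.mem_range] at hi' ⊢
    exact ⟨by omega, hi'.2⟩

lemma Nro_row_unique (X : SkewShape) {u i1 i2 : ℕ} (h1 : u ≤ X.rl i1) (h2 : u ≤ X.rl i2)
    (he : Nro X u i1 = Nro X u i2) : i1 = i2 := by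
  rcases Nat.lt_trichotomy i1 i2 with h | h | h
  · have := Nro_strict X h h2
    omega
  · exact h
  · have := Nro_strict X h h1
    omega

lemma Nro_le_Pset (X : SkewShape) (u : ℕ) {i : ℕ} (hi : i < X.numRows) :
    Nro X u i ≤ (Pset X u).card := by
  apply Finset.card_le_card
  intro i' hi'
  rw [Finset.mem_filter, Finset.mem_range] at hi'
  rw [Pset, Finset.mem_filter, Finset.mem_range]
  exact ⟨by omega, hi'.2⟩

lemma Nro_eq_rank (X : SkewShape) (u : ℕ) {i : ℕ} (hi : i < X.numRows) :
    Nro X u i = ((Pset X u).filter (· ≤ i)).card := by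
  rw [Nro]
  congr 1
  ext i'
  rw [Finset.mem_filter, Finset.mem_range, Pset, Finset.mem_filter, Finset.mem_filter,
    Finset.mem_range]
  constructor
  · rintro ⟨h1, h2⟩
    exact ⟨⟨by omega, h2⟩, by omega⟩
  · rintro ⟨⟨h1, h2⟩, h3⟩
    exact ⟨by omega, h2⟩

/-- the extreme filling of `X`, with content `rows(X)` -/
def rowFill (X : SkewShape) : SkewSsyt X where
  entry i j := if (i, j) ∈ X.cells then Nro X (X.outer.rowLen i - j) i else 0
  pos := by
    intro i j hc
    rw [if_pos hc]
    have hm := (X.mem_cells_iff).mp hc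
    dsimp only at hm
    have hin : i ∈ (Finset.range (i + 1)).filter (fun i' => X.outer.rowLen i - j ≤ X.rl i') := by
      rw [Finset.mem_filter, Finset.mem_range, SkewShape.rl]
      exact ⟨by omega, by omega⟩
    exact Finset.card_pos.mpr ⟨i, hin⟩
  zeros := by
    intro i j hc
    rw [if_neg hc]
  row_weak := by
    intro i j1 j2 hj hc1 hc2
    rw [if_pos hc1, if_pos hc2]
    exact Nro_anti_u X i (by omega)
  col_strict := by
    intro i1 i2 j hi hc1 hc2
    rw [if_pos hc1, if_pos hc2]
    have hm2 := (X.mem_cells_iff).mp hc2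
    dsimp only at hm2
    have hl : X.outer.rowLen i2 ≤ X.outer.rowLen i1 := X.outer.rowLen_anti i1 i2 (by omega)
    calc Nro X (X.outer.rowLen i1 - j) i1 ≤ Nro X (X.outer.rowLen i2 - j) i1 :=
        Nro_anti_u X i1 (by omega)
      _ < Nro X (X.outer.rowLen i2 - j) i2 := Nro_strict X hi (by rw [SkewShape.rl]; omega)

lemma rowFill_entry (X : SkewShape) {i j : ℕ} (hc : (i, j) ∈ X.cells) :
    (rowFill X).entry i j = Nro X (X.outer.rowLen i - j) i := by
  show (if (i, j) ∈ X.cells then Nro X (X.outer.rowLen i - j) i else 0) = _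
  rw [if_pos hc]

/-- the count of rows longer than a threshold -/
lemma countP_eq_Pset (X : SkewShape) (c : ℕ) :
    (((List.range X.numRows).map X.rl).filter (fun x => decide (0 < x))).countP
      (fun x => decide (c < x)) = (Pset X (c + 1)).card := by
  rw [List.countP_filter]
  have hcongr : ∀ x ∈ (List.range X.numRows).map X.rl,
      ((decide (c < x) && decide (0 < x)) = true ↔ (decide (c < x) : Bool) = true) := by
    intro x _
    by_cases h : c < x
    · have h0 : 0 < x := by omega
      simp [h, h0]
    · simp [h]
  rw [List.countP_congr hcongr, List.countP_map, countP_range]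
  rw [Pset]
  congr 1
  ext i
  rw [Finset.mem_filter, Finset.mem_filter]
  constructor
  · rintro ⟨h1, h2⟩
    simp only [Function.comp, decide_eq_true_eq] at h2
    exact ⟨h1, by omega⟩
  · rintro ⟨h1, h2⟩
    refine ⟨h1, ?_⟩
    simp only [Function.comp, decide_eq_true_eq]
    omega

lemma rowFill_hasContent (X : SkewShape) : HasContent (rowFill X) (X.rowsK 1) := by
  intro v
  have hbound : ∀ x ∈ ((List.range X.numRows).map X.rl).filter (fun x => decide (0 < x)),
      x ≤ X.numCols := by
    intro x hx
    have := List.mem_of_mem_filter hx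
    rw [List.mem_map] at this
    obtain ⟨i, _, rfl⟩ := this
    exact X.rl_le i
  rw [X.rowsK_one_eq, getD_sortDesc_card _ v X.numCols hbound, contentCount]
  apply Finset.card_bij (fun b _ => X.outer.rowLen b.1 - b.2 - 1)
  · intro b hb
    rw [Finset.mem_filter] at hb
    obtain ⟨i, j⟩ := b
    have hbe := hb.2
    rw [rowFill_entry X hb.1] at hbe
    have hm := (X.mem_cells_iff).mp hb.1
    dsimp only at *
    rw [Finset.mem_filter, Finset.mem_range, countP_eq_Pset]
    have hl := X.rowLen_le_numCols i
    have hc1 : X.outer.rowLen i - j - 1 + 1 = X.outer.rowLen i - j := by omega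
    refine ⟨by omega, ?_⟩
    rw [hc1]
    have := Nro_le_Pset X (X.outer.rowLen i - j) (show i < X.numRows from X.row_bound hb.1)
    omega
  · intro b1 hb1 b2 hb2 heq
    rw [Finset.mem_filter] at hb1 hb2
    obtain ⟨i1, j1⟩ := b1
    obtain ⟨i2, j2⟩ := b2
    have he1 := hb1.2
    have he2 := hb2.2
    rw [rowFill_entry X hb1.1] at he1
    rw [rowFill_entry X hb2.1] at he2
    have hm1 := (X.mem_cells_iff).mp hb1.1
    have hm2 := (X.mem_cells_iff).mp hb2.1
    dsimp only at *
    have hu : X.outer.rowLen i1 - j1 = X.outer.rowLen i2 - j2 := by omega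
    have hr1 : X.outer.rowLen i1 - j1 ≤ X.rl i1 := by rw [SkewShape.rl]; omega
    have hr2 : X.outer.rowLen i2 - j2 ≤ X.rl i2 := by rw [SkewShape.rl]; omega
    have hii : i1 = i2 := by
      apply Nro_row_unique X hr1 (by rw [hu] at hr1 ⊢; exact hr2)
      rw [← hu] at he2
      omega
    subst hii
    rw [Prod.mk.injEq]
    exact ⟨rfl, by omega⟩
  · intro c hc
    rw [Finset.mem_filter, Finset.mem_range, countP_eq_Pset] at hc
    obtain ⟨hcC, hcv⟩ := hc
    obtain ⟨i, hiP, hirank⟩ := rank_surj (v + 1) (Pset X (c + 1)) (by omega) (by omega)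
    rw [Pset, Finset.mem_filter, Finset.mem_range] at hiP
    have hrl := hiP.2
    rw [SkewShape.rl] at hrl
    have hml := X.inner_rowLen_le i
    refine ⟨(i, X.outer.rowLen i - (c + 1)), ?_, by dsimp only; omega⟩
    rw [Finset.mem_filter]
    have hmem : (i, X.outer.rowLen i - (c + 1)) ∈ X.cells := by
      rw [X.mem_cells_iff]
      dsimp only
      omega
    refine ⟨hmem, ?_⟩
    rw [rowFill_entry X hmem]
    have hth : X.outer.rowLen i - (X.outer.rowLen i - (c + 1)) = c + 1 := by omega
    rw [hth, Nro_eq_rank X (c + 1) hiP.1, hirank]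

lemma rowFill_isLR (X : SkewShape) : IsLR (rowFill X) := by
  intro c hc v he
  -- from the entry at c we get at least v+2 rows of length ≥ the relevant threshold,
  -- but we only use per-box data below
  apply Finset.card_le_card_of_injOn
    (fun b => (pick (Pset X (X.outer.rowLen b.1 - b.2)) (v + 1),
      X.outer.rowLen (pick (Pset X (X.outer.rowLen b.1 - b.2)) (v + 1))
        - (X.outer.rowLen b.1 - b.2)))
  · intro b hb
    rw [Finset.mem_coe, Finset.mem_filter] at hb
    obtain ⟨hbc, hbe, hbr⟩ := hb
    have hbe' := hbe
    rw [show b = (b.1, b.2) from rfl] at hbc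
    rw [rowFill_entry X hbc] at hbe'
    have hm := (X.mem_cells_iff).mp hbc
    dsimp only at hm
    set u := X.outer.rowLen b.1 - b.2 with hu
    have hurl : u ≤ X.rl b.1 := by rw [SkewShape.rl]; omega
    have hcardP : v + 2 ≤ (Pset X u).card := by
      have h1 := Nro_le_Pset X u (show b.1 < X.numRows from X.row_bound hbc)
      omega
    obtain ⟨hρP, hρrank⟩ := pick_spec (Pset X u) (v + 1) (by omega) (by omega)
    set ρ := pick (Pset X u) (v + 1) with hρ
    rw [Pset, Finset.mem_filter, Finset.mem_range] at hρP
    have hNρ : Nro X u ρ = v + 1 := by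
      rw [Nro_eq_rank X u hρP.1]
      exact hρrank
    have hρrl := hρP.2
    have hρml := X.inner_rowLen_le ρ
    have hρrl' : u ≤ X.outer.rowLen ρ := by
      rw [SkewShape.rl] at hρrl
      omega
    have hu1 : 1 ≤ u := by omega
    have hmemρ : (ρ, X.outer.rowLen ρ - u) ∈ X.cells := by
      rw [X.mem_cells_iff]
      dsimp only
      rw [SkewShape.rl] at hρrl
      omega
    have hρlt : ρ < b.1 := by
      by_contra hcon
      have := Nro_mono_i X u (show b.1 ≤ ρ by omega)
      omega
    rw [Finset.mem_coe, Finset.mem_filter]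
    refine ⟨hmemρ, ?_, ?_⟩
    · rw [rowFill_entry X hmemρ]
      have hthis : X.outer.rowLen ρ - (X.outer.rowLen ρ - u) = u := by omega
      rw [hthis]
      exact hNρ
    · rw [readBefore]
      left
      dsimp only
      have hb1c : b.1 ≤ c.1 := by
        rcases hbr with h | h
        · rw [readBefore] at h
          omega
        · rw [h]
      rw [← hu, ← hρ]
      omega
  · intro b1 hb1 b2 hb2 heq
    have h1 := Finset.mem_filter.mp (Finset.mem_coe.mp hb1)
    have h2 := Finset.mem_filter.mp (Finset.mem_coe.mp hb2)
    obtain ⟨hc1, he1, hr1⟩ := h1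
    obtain ⟨hc2, he2, hr2⟩ := h2
    have hc1' : (b1.1, b1.2) ∈ X.cells := hc1
    have hc2' : (b2.1, b2.2) ∈ X.cells := hc2
    rw [rowFill_entry X hc1'] at he1
    rw [rowFill_entry X hc2'] at he2
    have hm1 := (X.mem_cells_iff).mp hc1'
    have hm2 := (X.mem_cells_iff).mp hc2'
    dsimp only at hm1 hm2
    set u1 := X.outer.rowLen b1.1 - b1.2 with hu1
    set u2 := X.outer.rowLen b2.1 - b2.2 with hu2
    have hurl1 : u1 ≤ X.rl b1.1 := by rw [SkewShape.rl]; omega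
    have hurl2 : u2 ≤ X.rl b2.1 := by rw [SkewShape.rl]; omega
    have hcardP1 : v + 1 ≤ (Pset X u1).card := by
      have := Nro_le_Pset X u1 (show b1.1 < X.numRows from X.row_bound hc1')
      omega
    have hcardP2 : v + 1 ≤ (Pset X u2).card := by
      have := Nro_le_Pset X u2 (show b2.1 < X.numRows from X.row_bound hc2')
      omega
    obtain ⟨hρP1, hρrank1⟩ := pick_spec (Pset X u1) (v + 1) (by omega) hcardP1
    obtain ⟨hρP2, hρrank2⟩ := pick_spec (Pset X u2) (v + 1) (by omega) hcardP2
    have hpeq := (Prod.mk.injEq _ _ _ _).mp heq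
    have hρeq : pick (Pset X u1) (v + 1) = pick (Pset X u2) (v + 1) := hpeq.1
    set ρ := pick (Pset X u1) (v + 1) with hρ
    rw [← hρeq] at hρP2 hpeq
    rw [Pset, Finset.mem_filter] at hρP1 hρP2
    have hρr1 := hρP1.2
    have hρr2 := hρP2.2
    rw [SkewShape.rl] at hρr1 hρr2
    have huu : u1 = u2 := by
      have := hpeq.2
      omega
    rw [← huu] at he2 hurl2
    have hbb : b1.1 = b2.1 := Nro_row_unique X hurl1 hurl2 (by omega)
    have : b1.2 = b2.2 := by
      rw [hbb] at hu1
      omega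
    exact Prod.ext hbb this

/-! ### Final assembly -/

lemma countP_filter_pos_map (f : ℕ → ℕ) (n c : ℕ) :
    (((List.range n).map f).filter (fun x => decide (0 < x))).countP (fun x => decide (c < x))
      = ((Finset.range n).filter (fun i => c < f i)).card := by
  rw [List.countP_filter]
  have hcongr : ∀ x ∈ (List.range n).map f,
      ((decide (c < x) && decide (0 < x)) = true ↔ (decide (c < x) : Bool) = true) := by
    intro x _
    by_cases h : c < x
    · have h0 : 0 < x := by omega
      simp [h, h0]
    · simp [h]
  rw [List.countP_congr hcongr, List.countP_map, countP_range]
  congr 1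
  ext i
  rw [Finset.mem_filter, Finset.mem_filter]
  simp only [Function.comp, decide_eq_true_eq]

theorem dom_rows_of_spd {A B : SkewShape} (h : SchurPositiveDiff A B) :
    Dom (A.rowsK 1) (B.rowsK 1) := by
  intro k
  have hsB : (B.rowsK 1).Pairwise (· ≥ ·) := by
    rw [B.rowsK_one_eq]
    exact sortDesc_sorted _
  obtain ⟨TA, hTA_LR, hTA_cont⟩ := support_transfer h hsB
    ⟨rowFill B, rowFill_isLR B, rowFill_hasContent B⟩
  obtain ⟨s, hsub, hcard, hsum⟩ := take_sortDesc_select A.rl A.numRows k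
  calc ((A.rowsK 1).take k).sum
      = ((sortDesc (((List.range A.numRows).map A.rl).filter
          (fun x => decide (0 < x)))).take k).sum := by rw [A.rowsK_one_eq]
    _ ≤ ∑ i ∈ s, A.rl i := hsum
    _ = (A.cells.filter (fun c => c.1 ∈ s)).card := A.sum_rl s
    _ ≤ ∑ v ∈ Finset.range k, (B.rowsK 1).getD v 0 :=
        main_rows TA hTA_LR hTA_cont hsB s hcard
    _ = ((B.rowsK 1).take k).sum := (sum_take_eq _ _).symm

theorem dom_cols_of_spd {A B : SkewShape} (h : SchurPositiveDiff A B) :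
    Dom (A.colsK 1) (B.colsK 1) := by
  intro k
  obtain ⟨TA, hTA_LR, hTA_cont⟩ := support_transfer h (nuCol_sorted B)
    ⟨colFill B, colFill_isLR B, nuCol_hasContent B⟩
  obtain ⟨s, hsub, hcard, hsum⟩ := take_sortDesc_select A.cl A.numCols k
  have hfinal : ∑ v ∈ Finset.range (nuCol B).length, min ((nuCol B).getD v 0) k
      = ((B.colsK 1).take k).sum := by
    have hlen : (nuCol B).length = B.numRows := by
      rw [nuCol, List.length_map, List.length_range]
    rw [hlen]
    have hstep : ∀ v ∈ Finset.range B.numRows, min ((nuCol B).getD v 0) k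
        = ((Finset.range k).filter
            (fun i => i < ((Finset.range B.numCols).filter (fun j => v < B.cl j)).card)).card := by
      intro v hv
      rw [Finset.mem_range] at hv
      rw [nuCol, getD_map_range, if_pos hv, card_range_filter_lt]
    rw [Finset.sum_congr rfl hstep]
    have hswap : ∑ v ∈ Finset.range B.numRows, ((Finset.range k).filter
          (fun i => i < ((Finset.range B.numCols).filter (fun j => v < B.cl j)).card)).card
        = ∑ i ∈ Finset.range k, ((Finset.range B.numRows).filter
          (fun v => i < ((Finset.range B.numCols).filter (fun j => v < B.cl j)).card)).card := by
      simp only [Finset.card_filter]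
      exact Finset.sum_comm
    rw [hswap, sum_take_eq]
    apply Finset.sum_congr rfl
    intro i _
    have hbound : ∀ x ∈ ((List.range B.numCols).map B.cl).filter (fun x => decide (0 < x)),
        x ≤ B.numRows := by
      intro x hx
      have := List.mem_of_mem_filter hx
      rw [List.mem_map] at this
      obtain ⟨j, _, rfl⟩ := this
      exact B.cl_le j
    rw [B.colsK_one_eq, getD_sortDesc_card _ i B.numRows hbound]
    congr 1
    ext v
    rw [Finset.mem_filter, Finset.mem_filter, countP_filter_pos_map]
  calc ((A.colsK 1).take k).sum
      = ((sortDesc (((List.range A.numCols).map A.cl).filter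
          (fun x => decide (0 < x)))).take k).sum := by rw [A.colsK_one_eq]
    _ ≤ ∑ j ∈ s, A.cl j := hsum
    _ = (A.cells.filter (fun c => c.2 ∈ s)).card := A.sum_cl s
    _ ≤ ∑ v ∈ Finset.range (nuCol B).length, min ((nuCol B).getD v 0) k :=
        main_cols TA hTA_cont s hcard
    _ = ((B.colsK 1).take k).sum := hfinal
/-- second part of Proposition `pro:extreme_fillings`.
Let `A` and `B` be skew shapes.  If the difference `s_A − s_B` of their skew Schur
functions is Schur-positive, then `rows(A) ⊴ rows(B)` and `cols(A) ⊴ cols(B)` in the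
dominance order, where `rows(·)` and `cols(·)` denote the partitions of row lengths
and column lengths respectively. -/
theorem rows_cols_dom_of_schurPositiveDiff (A B : SkewShape)
    (h : SchurPositiveDiff A B) :
    Dom (A.rowsK 1) (B.rowsK 1) ∧ Dom (A.colsK 1) (B.colsK 1) := by
  exact ⟨dom_rows_of_spd h, dom_cols_of_spd h⟩
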